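/- Every rule R in {R^+_min, R^max_min, R^+_Σ, R^max_Σ} satisfies weak continuity: for every PB instance I and project p with sat_i(p) > 0 for all voters i, and such that some feasible bundle contains p, there exist c, k ∈ ℕ such that after adding k new voters who each have satisfaction c for p, satisfaction 0 for every other project, and donate nothing, every score-maximizing feasible bundle contains p. -/

import Mathlib

/-- A participatory budgeting instance with projects, types, voters (with satisfaction
and donation vectors), a budget, and diversity constraints. -/
structure PBI where
  m : ℕ
  n : ℕ
  t : ℕ
  cost : Fin m → ℕ
  tau : Fin m → Fin t → ℕ
  sat : Fin n → Fin m → ℕ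
  don : Fin n → Fin m → ℕ
  budget : ℕ
  lo : Fin t → ℕ
  hi : Fin t → ℕ

/-- Feasibility: donation-reduced total cost within budget, diversity constraints met. -/
def PBI.feasible (I : PBI) (A : Finset (Fin I.m)) : Prop :=
  (∑ j ∈ A, (I.cost j - ∑ i : Fin I.n, I.don i j)) ≤ I.budget ∧
  ∀ z : Fin I.t, I.lo z ≤ ∑ j ∈ A, I.tau j z ∧ ∑ j ∈ A, I.tau j z ≤ I.hi z

/-- Add `k` new voters, each with satisfaction `c` for project `p`, satisfaction 0 for
every other project, and no donations. -/
def PBI.addVoters (I : PBI) (p : Fin I.m) (c k : ℕ) : PBI where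
  m := I.m
  n := I.n + k
  t := I.t
  cost := I.cost
  tau := I.tau
  sat := fun i q => if h : (i : ℕ) < I.n then I.sat ⟨i, h⟩ q else if q = p then c else 0
  don := fun i q => if h : (i : ℕ) < I.n then I.don ⟨i, h⟩ q else 0
  budget := I.budget
  lo := I.lo
  hi := I.hi

/-- The `R^+_min` score: minimum over voters of additive utility. -/
noncomputable def sMinAdd (I : PBI) (A : Finset (Fin I.m)) : ℕ := ⨅ i : Fin I.n, ∑ j ∈ A, I.sat i j

/-- The `R^max_min` score: minimum over voters of maximum satisfaction. -/
noncomputable def sMinMax (I : PBI) (A : Finset (Fin I.m)) : ℕ := ⨅ i : Fin I.n, A.sup (I.sat i)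

/-- The `R^+_Σ` score: sum over voters of additive utility. -/
def sSumAdd (I : PBI) (A : Finset (Fin I.m)) : ℕ := ∑ i : Fin I.n, ∑ j ∈ A, I.sat i j

/-- The `R^max_Σ` score: sum over voters of maximum satisfaction. -/
def sSumMax (I : PBI) (A : Finset (Fin I.m)) : ℕ := ∑ i : Fin I.n, A.sup (I.sat i)

lemma donsum (I : PBI) (p : Fin I.m) (c k : ℕ) (j : Fin I.m) :
    ∑ i : Fin (I.n + k), (I.addVoters p c k).don i j = ∑ i : Fin I.n, I.don i j := by
  rw [Fin.sum_univ_add]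
  simp [PBI.addVoters]

lemma addVoters_feasible (I : PBI) (p : Fin I.m) (c k : ℕ) (A : Finset (Fin I.m)) :
    (I.addVoters p c k).feasible A ↔ I.feasible A := by
  unfold PBI.feasible
  have : ∀ j, ∑ i : Fin ((I.addVoters p c k).n), (I.addVoters p c k).don i j
      = ∑ i : Fin I.n, I.don i j := donsum I p c k
  constructor <;> intro h <;> refine ⟨?_, h.2⟩
  · calc ∑ j ∈ A, (I.cost j - ∑ i : Fin I.n, I.don i j)
        = ∑ j ∈ A, ((I.addVoters p c k).cost j - ∑ i, (I.addVoters p c k).don i j) := by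
          apply Finset.sum_congr rfl; intro j _; rw [this j]; rfl
      _ ≤ _ := h.1
  · calc ∑ j ∈ A, ((I.addVoters p c k).cost j - ∑ i, (I.addVoters p c k).don i j)
        = ∑ j ∈ A, (I.cost j - ∑ i : Fin I.n, I.don i j) := by
          apply Finset.sum_congr rfl; intro j _; rw [this j]; rfl
      _ ≤ _ := h.1

lemma sat_pos (I : PBI) (p : Fin I.m) (c k : ℕ) (hc : 0 < c) (hpos : ∀ i, 0 < I.sat i p)
    (i : Fin ((I.addVoters p c k).n)) : 0 < (I.addVoters p c k).sat i p := by
  show 0 < if h : (i : ℕ) < I.n then I.sat ⟨i, h⟩ p else if p = p then c else 0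
  split
  · exact hpos _
  · simpa using hc

lemma sat_old (I : PBI) (p : Fin I.m) (c k : ℕ) (i : Fin I.n) (q : Fin I.m) :
    (I.addVoters p c k).sat (Fin.castAdd k i) q = I.sat i q := by
  show (if h : ((Fin.castAdd k i : Fin (I.n + k)) : ℕ) < I.n
        then I.sat ⟨_, h⟩ q else if q = p then c else 0) = I.sat i q
  rw [dif_pos (by simp)]
  congr 1

lemma sat_new (I : PBI) (p : Fin I.m) (c k : ℕ) (i : Fin ((I.addVoters p c k).n))
    (hi : ¬ (i : ℕ) < I.n) (q : Fin I.m) :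
    (I.addVoters p c k).sat i q = if q = p then c else 0 := by
  show (if h : (i : ℕ) < I.n then I.sat ⟨i, h⟩ q else if q = p then c else 0) = _
  rw [dif_neg hi]

lemma sSumAdd_addVoters (I : PBI) (p : Fin I.m) (c k : ℕ) (A : Finset (Fin I.m)) :
    sSumAdd (I.addVoters p c k) A = sSumAdd I A + k * (if p ∈ A then c else 0) := by
  show ∑ i : Fin (I.n + k), ∑ j ∈ A, (I.addVoters p c k).sat i j = _
  rw [Fin.sum_univ_add]
  congr 1
  · exact Finset.sum_congr rfl fun i _ => Finset.sum_congr rfl fun j _ => sat_old I p c k i j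
  · have h1 : ∀ i : Fin k, ∑ j ∈ A, (I.addVoters p c k).sat (Fin.natAdd I.n i) j
        = if p ∈ A then c else 0 := by
      intro i
      have hni : ¬ ((Fin.natAdd I.n i : Fin (I.n + k)) : ℕ) < I.n := by simp
      refine (Finset.sum_congr rfl fun j _ => sat_new I p c k _ hni j).trans ?_
      exact Finset.sum_ite_eq' A p (fun _ => c)
    rw [Finset.sum_congr rfl fun i _ => h1 i]
    simp [mul_comm]

lemma sup_new (I : PBI) (p : Fin I.m) (c k : ℕ) (A : Finset (Fin I.m)) (i : Fin k) :
    A.sup ((I.addVoters p c k).sat (Fin.natAdd I.n i)) = if p ∈ A then c else 0 := by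
  have hni : ¬ ((Fin.natAdd I.n i : Fin (I.n + k)) : ℕ) < I.n := by simp
  refine (Finset.sup_congr rfl fun j _ => sat_new I p c k _ hni j).trans ?_
  by_cases hp : p ∈ A
  · rw [if_pos hp]
    refine le_antisymm (Finset.sup_le fun j _ => by split <;> simp) ?_
    have := Finset.le_sup (f := fun q : Fin I.m => if q = p then c else 0) hp
    simpa using this
  · rw [if_neg hp]
    refine Nat.le_zero.1 (Finset.sup_le fun j hj => ?_)
    rw [if_neg (show j ≠ p from fun hjp => hp (hjp ▸ hj))]

lemma sSumMax_addVoters (I : PBI) (p : Fin I.m) (c k : ℕ) (A : Finset (Fin I.m)) :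
    sSumMax (I.addVoters p c k) A = sSumMax I A + k * (if p ∈ A then c else 0) := by
  show ∑ i : Fin (I.n + k), A.sup ((I.addVoters p c k).sat i) = _
  rw [Fin.sum_univ_add]
  congr 1
  · exact Finset.sum_congr rfl fun i _ => Finset.sup_congr rfl fun j _ => sat_old I p c k i j
  · rw [Finset.sum_congr rfl fun i _ => sup_new I p c k A i]
    simp [mul_comm]

/-- Each of the four rules satisfies weak continuity: if every voter has positive
satisfaction for `p` and some feasible bundle contains `p`, then there are `c`, `k`
such that after adding `k` new voters with satisfaction `c` for `p` only (and no
donations), every score-maximizing feasible bundle contains `p`. -/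
theorem stmt_14 (sc : (I : PBI) → Finset (Fin I.m) → ℕ)
    (hsc : sc = sMinAdd ∨ sc = sMinMax ∨ sc = sSumAdd ∨ sc = sSumMax) :
    ∀ (I : PBI) (p : Fin I.m), (∀ i, 0 < I.sat i p) → (∃ A, I.feasible A ∧ p ∈ A) →
      ∃ c k : ℕ, ∀ W, (I.addVoters p c k).feasible W →
        (∀ A, (I.addVoters p c k).feasible A →
          sc (I.addVoters p c k) A ≤ sc (I.addVoters p c k) W) →
        p ∈ W := by
  intro I p hpos ⟨A₀, hA₀f, hpA₀⟩
  rcases hsc with h | h | h | h <;> subst h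
  · -- sMinAdd : c = 1, k = 1
    refine ⟨1, 1, ?_⟩
    intro W hWf hmax
    by_contra hpW
    haveI : Nonempty (Fin ((I.addVoters p 1 1).n)) :=
      ⟨⟨I.n, show I.n < I.n + 1 from Nat.lt_succ_self _⟩⟩
    have h1 := hmax A₀ ((addVoters_feasible I p 1 1 A₀).2 hA₀f)
    have hnewi : ¬ ((⟨I.n, show I.n < I.n + 1 from Nat.lt_succ_self _⟩ :
        Fin ((I.addVoters p 1 1).n)) : ℕ) < I.n := by simp
    have hlow : 1 ≤ sMinAdd (I.addVoters p 1 1) A₀ := by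
      refine le_ciInf fun i => ?_
      calc 1 ≤ (I.addVoters p 1 1).sat i p := sat_pos I p 1 1 one_pos hpos i
        _ ≤ ∑ j ∈ A₀, (I.addVoters p 1 1).sat i j :=
          Finset.single_le_sum (fun _ _ => Nat.zero_le _) hpA₀
    have hup : sMinAdd (I.addVoters p 1 1) W ≤ 0 := by
      refine (ciInf_le (OrderBot.bddBelow _)
        (⟨I.n, show I.n < I.n + 1 from Nat.lt_succ_self _⟩ :
          Fin ((I.addVoters p 1 1).n))).trans (le_of_eq ?_)
      refine Finset.sum_eq_zero fun j hj => ?_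
      exact (sat_new I p 1 1 _ hnewi j).trans (if_neg (show j ≠ p from fun hjp => hpW (hjp ▸ hj)))
    omega
  · -- sMinMax : c = 1, k = 1
    refine ⟨1, 1, ?_⟩
    intro W hWf hmax
    by_contra hpW
    haveI : Nonempty (Fin ((I.addVoters p 1 1).n)) :=
      ⟨⟨I.n, show I.n < I.n + 1 from Nat.lt_succ_self _⟩⟩
    have h1 := hmax A₀ ((addVoters_feasible I p 1 1 A₀).2 hA₀f)
    have hnewi : ¬ ((⟨I.n, show I.n < I.n + 1 from Nat.lt_succ_self _⟩ :
        Fin ((I.addVoters p 1 1).n)) : ℕ) < I.n := by simp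
    have hlow : 1 ≤ sMinMax (I.addVoters p 1 1) A₀ := by
      refine le_ciInf fun i => ?_
      calc 1 ≤ (I.addVoters p 1 1).sat i p := sat_pos I p 1 1 one_pos hpos i
        _ ≤ A₀.sup ((I.addVoters p 1 1).sat i) := Finset.le_sup hpA₀
    have hup : sMinMax (I.addVoters p 1 1) W ≤ 0 := by
      refine (ciInf_le (OrderBot.bddBelow _)
        (⟨I.n, show I.n < I.n + 1 from Nat.lt_succ_self _⟩ :
          Fin ((I.addVoters p 1 1).n))).trans ?_
      refine Finset.sup_le fun j hj => ?_
      exact ((sat_new I p 1 1 _ hnewi j).trans (if_neg (show j ≠ p from fun hjp => hpW (hjp ▸ hj)))).le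
    omega
  · -- sSumAdd : c = 1, k = M + 1
    refine ⟨1, (∑ i : Fin I.n, ∑ j : Fin I.m, I.sat i j) + 1, ?_⟩
    intro W hWf hmax
    by_contra hpW
    have h1 := hmax A₀ ((addVoters_feasible I p 1 _ A₀).2 hA₀f)
    rw [sSumAdd_addVoters, if_pos hpA₀] at h1
    have h2 := sSumAdd_addVoters I p 1 ((∑ i : Fin I.n, ∑ j : Fin I.m, I.sat i j) + 1) W
    split_ifs at h2 with hh
    · exact absurd hh hpW
    have hWle : sSumAdd I W ≤ ∑ i : Fin I.n, ∑ j : Fin I.m, I.sat i j :=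
      Finset.sum_le_sum fun i _ => Finset.sum_le_sum_of_subset (Finset.subset_univ W)
    omega
  · -- sSumMax : c = 1, k = M + 1
    refine ⟨1, (∑ i : Fin I.n, ∑ j : Fin I.m, I.sat i j) + 1, ?_⟩
    intro W hWf hmax
    by_contra hpW
    have h1 := hmax A₀ ((addVoters_feasible I p 1 _ A₀).2 hA₀f)
    rw [sSumMax_addVoters, if_pos hpA₀] at h1
    have h2 := sSumMax_addVoters I p 1 ((∑ i : Fin I.n, ∑ j : Fin I.m, I.sat i j) + 1) W
    split_ifs at h2 with hh
    · exact absurd hh hpW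
    have hWle : sSumMax I W ≤ ∑ i : Fin I.n, ∑ j : Fin I.m, I.sat i j := by
      refine Finset.sum_le_sum fun i _ => Finset.sup_le fun j _ => ?_
      exact Finset.single_le_sum (fun _ _ => Nat.zero_le _) (Finset.mem_univ j)
    omega
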